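/- Let φ : ℝ → ℝ ∪ {+∞} be a proper, convex, lower semicontinuous function with φ(1) = 0, φ(t) = +∞ for t < 0, and φ finite on (0,∞), and let φ*(s) = sup_{t ≥ 0} (t·s − φ(t)). Then for every ν ∈ Δ^n, inf{ (1/n) ∑_{i=1}^n φ(n·μ_i) : μ ∈ ℝ^n, μ_i ≥ 0 for all i, ν − μ ∈ K^n } = sup{ ∑_{i=1}^n ( ν_i·λ_i − (1/n)·φ*(λ_i) ) : λ ∈ ℝ^n, λ_1 ≤ λ_2 ≤ ⋯ ≤ λ_n }. -/

import Mathlib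

/-- The majorization cone `K^n`. -/
def majorCone (n : ℕ) : Set (Fin n → ℝ) :=
  {x | (∀ k : ℕ, k < n →
          0 ≤ ∑ i ∈ Finset.univ.filter (fun i : Fin n => (i : ℕ) < k), x i) ∧
        ∑ i, x i = 0}

open Finset

lemma erealCoeSum {α : Type*} (s : Finset α) (f : α → ℝ) :
    ((∑ i ∈ s, f i : ℝ) : EReal) = ∑ i ∈ s, ((f i : ℝ) : EReal) := by
  classical
  induction s using Finset.induction_on with
  | empty => simp
  | @insert _ _ h ih => rw [Finset.sum_insert h, Finset.sum_insert h, EReal.coe_add, ih]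

/-- Abel summation identity. `S x k = ∑_{j<k} x j`. -/
lemma abelIdentity (n : ℕ) (x lam : ℕ → ℝ) :
    ∑ k ∈ range n, x k * lam k =
      (∑ k ∈ range n, (∑ j ∈ range (k+1), x j) * (lam k - lam (k+1)))
        + (∑ j ∈ range n, x j) * lam n := by
  induction n with
  | zero => simp
  | succ n ih =>
    rw [Finset.sum_range_succ, ih, Finset.sum_range_succ (fun k => (∑ j ∈ range (k+1), x j) * (lam k - lam (k+1))), Finset.sum_range_succ x]
    ring

section Slopes

variable (φ : ℝ → EReal)

/-- realification -/
noncomputable def fR (t : ℝ) : ℝ := (φ t).toReal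

lemma phi_eq_coe (hφ_bot : ∀ t : ℝ, φ t ≠ ⊥) (hφ_fin : ∀ t : ℝ, 0 < t → φ t ≠ ⊤)
    {t : ℝ} (ht : 0 < t) : φ t = ((fR φ t : ℝ) : EReal) :=
  (EReal.coe_toReal (hφ_fin t ht) (hφ_bot t)).symm

lemma threepoint (hφ_bot : ∀ t : ℝ, φ t ≠ ⊥)
    (hφ_conv : ∀ x y a b : ℝ, 0 ≤ a → 0 ≤ b → a + b = 1 →
      φ (a * x + b * y) ≤ (a : EReal) * φ x + (b : EReal) * φ y)
    (hφ_fin : ∀ t : ℝ, 0 < t → φ t ≠ ⊤)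
    {u t v : ℝ} (hu : 0 < u) (hut : u < t) (htv : t < v) :
    (fR φ t - fR φ u) / (t - u) ≤ (fR φ v - fR φ t) / (v - t) := by
  have ht : 0 < t := hu.trans hut
  have hv : 0 < v := ht.trans htv
  have hvu : (0:ℝ) < v - u := by linarith
  have ha : (0:ℝ) ≤ (v - t) / (v - u) := div_nonneg (by linarith) (by linarith)
  have hb : (0:ℝ) ≤ (t - u) / (v - u) := div_nonneg (by linarith) (by linarith)
  have hab : (v - t) / (v - u) + (t - u) / (v - u) = 1 := by field_simp; ring
  have hcomb : (v - t) / (v - u) * u + (t - u) / (v - u) * v = t := by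
    field_simp; ring
  have h := hφ_conv u v _ _ ha hb hab
  rw [hcomb] at h
  rw [phi_eq_coe φ hφ_bot hφ_fin hu, phi_eq_coe φ hφ_bot hφ_fin ht,
    phi_eq_coe φ hφ_bot hφ_fin hv, ← EReal.coe_mul, ← EReal.coe_mul,
    ← EReal.coe_add, EReal.coe_le_coe_iff] at h
  rw [div_le_div_iff₀ (by linarith) (by linarith)]
  have h2 : (v - u) * fR φ t ≤ (v - t) * fR φ u + (t - u) * fR φ v := by
    have := mul_le_mul_of_nonneg_left h (le_of_lt hvu)
    calc (v - u) * fR φ t ≤ (v - u) * ((v - t)/(v-u) * fR φ u + (t-u)/(v-u) * fR φ v) := this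
    _ = (v - t) * fR φ u + (t - u) * fR φ v := by field_simp
  nlinarith [h2]

noncomputable def leftD (t : ℝ) : ℝ :=
  sSup {q : ℝ | ∃ u, 0 < u ∧ u < t ∧ q = (fR φ t - fR φ u) / (t - u)}

variable (hφ_bot : ∀ t : ℝ, φ t ≠ ⊥)
    (hφ_conv : ∀ x y a b : ℝ, 0 ≤ a → 0 ≤ b → a + b = 1 →
      φ (a * x + b * y) ≤ (a : EReal) * φ x + (b : EReal) * φ y)
    (hφ_fin : ∀ t : ℝ, 0 < t → φ t ≠ ⊤)

include hφ_bot hφ_conv hφ_fin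

lemma slope_le_leftD {t u : ℝ} (hu : 0 < u) (hut : u < t) :
    (fR φ t - fR φ u) / (t - u) ≤ leftD φ t := by
  have ht : 0 < t := hu.trans hut
  apply le_csSup
  · refine ⟨(fR φ (t+1) - fR φ t) / ((t+1) - t), ?_⟩
    rintro q ⟨w, hw, hwt, rfl⟩
    exact threepoint φ hφ_bot hφ_conv hφ_fin hw hwt (by linarith)
  · exact ⟨u, hu, hut, rfl⟩

lemma leftD_le_slope {t v : ℝ} (ht : 0 < t) (htv : t < v) :
    leftD φ t ≤ (fR φ v - fR φ t) / (v - t) := by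
  have hne : {q : ℝ | ∃ u, 0 < u ∧ u < t ∧ q = (fR φ t - fR φ u) / (t - u)}.Nonempty :=
    ⟨(fR φ t - fR φ (t/2)) / (t - t/2), ⟨t/2, by linarith, by linarith, rfl⟩⟩
  apply csSup_le hne
  rintro q ⟨w, hw, hwt, rfl⟩
  exact threepoint φ hφ_bot hφ_conv hφ_fin hw hwt htv

lemma subgrad_pos {t u : ℝ} (ht : 0 < t) (hu : 0 < u) :
    fR φ t + leftD φ t * (u - t) ≤ fR φ u := by
  rcases lt_trichotomy u t with h | h | h
  · have h4 := slope_le_leftD φ hφ_bot hφ_conv hφ_fin hu h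
    rw [div_le_iff₀ (by linarith)] at h4
    nlinarith
  · simp [h]
  · have h3 := leftD_le_slope φ hφ_bot hφ_conv hφ_fin ht h
    rw [le_div_iff₀ (by linarith)] at h3
    nlinarith

lemma leftD_mono {t1 t2 : ℝ} (h1 : 0 < t1) (h12 : t1 < t2) :
    leftD φ t1 ≤ leftD φ t2 :=
  (leftD_le_slope φ hφ_bot hφ_conv hφ_fin h1 h12).trans
    (slope_le_leftD φ hφ_bot hφ_conv hφ_fin h1 h12)

lemma subgrad_zero {t : ℝ} (ht : 0 < t) :
    ((fR φ t - leftD φ t * t : ℝ) : EReal) ≤ φ 0 := by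
  rcases eq_or_ne (φ 0) ⊤ with h0 | h0
  · simp [h0]
  · obtain ⟨f0, hf0⟩ : ∃ f0 : ℝ, φ 0 = (f0 : EReal) := by
      lift φ 0 to ℝ using ⟨h0, hφ_bot 0⟩ with f0; exact ⟨f0, rfl⟩
    rw [hf0, EReal.coe_le_coe_iff]
    have key : ∀ u : ℝ, 0 < u → u < t →
        fR φ t + leftD φ t * (u - t) ≤ (1 - u/t) * f0 + (u/t) * fR φ t := by
      intro u hu hut
      have hcomb : (1 - u/t) * 0 + (u/t) * t = u := by field_simp; ring
      have h := hφ_conv 0 t (1 - u/t) (u/t)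
        (by rw [sub_nonneg]; exact div_le_one_of_le₀ hut.le ht.le)
        (by positivity) (by ring)
      rw [hcomb, hf0, phi_eq_coe φ hφ_bot hφ_fin ht, phi_eq_coe φ hφ_bot hφ_fin hu,
        ← EReal.coe_mul, ← EReal.coe_mul, ← EReal.coe_add, EReal.coe_le_coe_iff] at h
      exact (subgrad_pos φ hφ_bot hφ_conv hφ_fin ht hu).trans h
    have h1 : Filter.Tendsto (fun u : ℝ => fR φ t + leftD φ t * (u - t))
        (nhdsWithin 0 (Set.Ioo 0 t)) (nhds (fR φ t - leftD φ t * t)) := by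
      apply Filter.Tendsto.mono_left _ nhdsWithin_le_nhds
      have : Continuous (fun u : ℝ => fR φ t + leftD φ t * (u - t)) := by continuity
      have := this.tendsto 0
      convert this using 2; ring
    have h2 : Filter.Tendsto (fun u : ℝ => (1 - u/t) * f0 + (u/t) * fR φ t)
        (nhdsWithin 0 (Set.Ioo 0 t)) (nhds f0) := by
      apply Filter.Tendsto.mono_left _ nhdsWithin_le_nhds
      have : Continuous (fun u : ℝ => (1 - u/t) * f0 + (u/t) * fR φ t) := by continuity
      have h3 := this.tendsto 0
      simpa using h3
    have hne : (nhdsWithin (0:ℝ) (Set.Ioo 0 t)).NeBot := by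
      apply IsGLB.nhdsWithin_neBot
      · exact isGLB_Ioo ht
      · exact Set.nonempty_Ioo.2 ht
    exact le_of_tendsto_of_tendsto h1 h2
      (Filter.eventually_iff_exists_mem.2 ⟨Set.Ioo 0 t, self_mem_nhdsWithin,
          fun u hu => key u hu.1 hu.2⟩)

end Slopes

section Star

variable (φ : ℝ → EReal)
    (hφ_bot : ∀ t : ℝ, φ t ≠ ⊥)
    (hφ_conv : ∀ x y a b : ℝ, 0 ≤ a → 0 ≤ b → a + b = 1 →
      φ (a * x + b * y) ≤ (a : EReal) * φ x + (b : EReal) * φ y)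
    (hφ_fin : ∀ t : ℝ, 0 < t → φ t ≠ ⊤)

include hφ_bot hφ_conv hφ_fin

lemma phistar_attain {t : ℝ} (ht : 0 < t) :
    (⨆ u ∈ Set.Ici (0:ℝ), ((u * leftD φ t : ℝ) : EReal) - φ u)
      = ((t * leftD φ t - fR φ t : ℝ) : EReal) := by
  apply le_antisymm
  · apply iSup₂_le
    intro u hu
    rcases eq_or_lt_of_le (Set.mem_Ici.1 hu) with h | h
    · have h0 := subgrad_zero φ hφ_bot hφ_conv hφ_fin ht
      calc ((u * leftD φ t : ℝ) : EReal) - φ u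
          ≤ ((u * leftD φ t : ℝ) : EReal) - ((fR φ t - leftD φ t * t : ℝ) : EReal) := by
            rw [← h]; exact EReal.sub_le_sub le_rfl h0
        _ = ((t * leftD φ t - fR φ t : ℝ) : EReal) := by
            rw [← EReal.coe_sub, ← h, EReal.coe_eq_coe_iff]; ring
    · rw [phi_eq_coe φ hφ_bot hφ_fin h, ← EReal.coe_sub, EReal.coe_le_coe_iff]
      have := subgrad_pos φ hφ_bot hφ_conv hφ_fin ht h
      nlinarith
  · have hmem : t ∈ Set.Ici (0:ℝ) := le_of_lt ht
    refine le_trans ?_ (le_iSup₂ (f := fun u (_ : u ∈ Set.Ici (0:ℝ)) =>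
      ((u * leftD φ t : ℝ) : EReal) - φ u) t hmem)
    rw [phi_eq_coe φ hφ_bot hφ_fin ht, ← EReal.coe_sub]

lemma phistar_neg_bound (hφ_lsc : LowerSemicontinuous φ) (hφ_one : φ 1 = 0)
    {c : ℝ} (hc : (c : EReal) < φ 0) :
    ∃ M : ℝ, ∀ r : ℝ, M ≤ r →
      (⨆ u ∈ Set.Ici (0:ℝ), ((u * (-r) : ℝ) : EReal) - φ u) ≤ ((-c : ℝ) : EReal) := by
  have h1 : fR φ 1 = 0 := by rw [fR, hφ_one]; rfl
  set s1 := leftD φ 1 with hs1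
  have hmin : ∀ u : ℝ, 0 < u → ((s1 * (u - 1) : ℝ) : EReal) ≤ φ u := by
    intro u hu
    rw [phi_eq_coe φ hφ_bot hφ_fin hu, EReal.coe_le_coe_iff]
    have := subgrad_pos φ hφ_bot hφ_conv hφ_fin one_pos hu
    rw [h1] at this; linarith
  obtain ⟨δ, hδ, hball⟩ : ∃ δ > 0, ∀ x' : ℝ, |x' - 0| < δ → (c : EReal) < φ x' := by
    have := hφ_lsc 0 (c : EReal) hc
    rw [Metric.eventually_nhds_iff] at this
    obtain ⟨ε, hε, h⟩ := this
    exact ⟨ε, hε, fun x' hx' => h (by simpa [Real.dist_eq] using hx')⟩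
  refine ⟨(|c| + |s1|)/δ + |s1|, fun r hr => ?_⟩
  have hr0 : 0 ≤ r := le_trans (by positivity) hr
  apply iSup₂_le
  intro u hu
  rcases lt_or_ge u δ with h | h
  · have hcu : (c : EReal) ≤ φ u := le_of_lt (hball u (by rw [sub_zero, abs_of_nonneg (Set.mem_Ici.1 hu)]; exact h))
    calc ((u * (-r) : ℝ) : EReal) - φ u ≤ ((u * (-r) : ℝ) : EReal) - ((c:ℝ) : EReal) :=
          EReal.sub_le_sub le_rfl hcu
      _ = ((u * (-r) - c : ℝ) : EReal) := by rw [← EReal.coe_sub]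
      _ ≤ ((-c : ℝ) : EReal) := by
          rw [EReal.coe_le_coe_iff]
          nlinarith [mul_nonneg (Set.mem_Ici.1 hu) hr0]
  · have hu0 : 0 < u := lt_of_lt_of_le hδ h
    calc ((u * (-r) : ℝ) : EReal) - φ u ≤ ((u * (-r) : ℝ) : EReal) - ((s1 * (u-1) : ℝ) : EReal) :=
          EReal.sub_le_sub le_rfl (hmin u hu0)
      _ = ((u * (-r) - s1 * (u-1) : ℝ) : EReal) := by rw [← EReal.coe_sub]
      _ ≤ ((-c : ℝ) : EReal) := by
          rw [EReal.coe_le_coe_iff]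
          have h2 : ((|c| + |s1|)/δ + |s1|) * u ≤ r * u :=
            mul_le_mul_of_nonneg_right hr hu0.le
          have h3 : (|c| + |s1|) ≤ (|c| + |s1|)/δ * u := by
            rw [div_mul_eq_mul_div, le_div_iff₀ hδ]
            have : (0:ℝ) ≤ |c| + |s1| := by positivity
            nlinarith
          have hc1 : c ≤ |c| := le_abs_self c
          have hs11 : s1 ≤ |s1| := le_abs_self s1
          have hs12 : -s1 * u ≤ |s1| * u :=
            mul_le_mul_of_nonneg_right (neg_le_abs s1) hu0.le
          nlinarith

end Star

section MinPart

lemma sum_update_two {n : ℕ} (g : ℝ → ℝ) (μ : Fin n → ℝ) {i₀ i₁ : Fin n} (hne : i₀ ≠ i₁)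
    (a b : ℝ) (S : Finset (Fin n)) :
    ∑ i ∈ S, g ((Function.update (Function.update μ i₀ a) i₁ b) i)
      = ∑ i ∈ S, g (μ i) + (if i₀ ∈ S then g a - g (μ i₀) else 0)
          + (if i₁ ∈ S then g b - g (μ i₁) else 0) := by
  have hpt : ∀ i, g ((Function.update (Function.update μ i₀ a) i₁ b) i)
      = g (μ i) + (if i = i₀ then g a - g (μ i₀) else 0)
        + (if i = i₁ then g b - g (μ i₁) else 0) := by
    intro i
    by_cases h1 : i = i₁
    · subst h1
      simp [Function.update_apply, (Ne.symm hne)]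
    · by_cases h0 : i = i₀
      · subst h0
        simp [Function.update_apply, h1]
      · simp [Function.update_apply, h0, h1]
  rw [Finset.sum_congr rfl (fun i _ => hpt i)]
  rw [Finset.sum_add_distrib, Finset.sum_add_distrib, Finset.sum_ite_eq' S i₀,
    Finset.sum_ite_eq' S i₁]

variable {n : ℕ} (ν : Fin n → ℝ)

/-- feasible set -/
def feas : Set (Fin n → ℝ) := {μ : Fin n → ℝ | (∀ i, 0 ≤ μ i) ∧ ν - μ ∈ majorCone n}

lemma sum_eq_one_of_feas (hν : ν ∈ stdSimplex ℝ (Fin n)) {μ : Fin n → ℝ}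
    (hμ : μ ∈ feas ν) : ∑ i, μ i = 1 := by
  have h := hμ.2.2
  simp only [Pi.sub_apply] at h
  rw [Finset.sum_sub_distrib] at h
  have : ∑ i, ν i = 1 := hν.2
  linarith

lemma feas_isCompact (hν : ν ∈ stdSimplex ℝ (Fin n)) : IsCompact (feas ν) := by
  have hsub : feas ν ⊆ Set.Icc (0 : Fin n → ℝ) 1 := by
    intro μ hμ
    constructor
    · intro i; exact hμ.1 i
    · intro i
      have h1 : ∑ j, μ j = 1 := sum_eq_one_of_feas ν hν hμ
      have := Finset.single_le_sum (f := μ) (fun j _ => hμ.1 j) (Finset.mem_univ i)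
      rw [h1] at this
      simpa using this
  have hclosed : IsClosed (feas ν) := by
    have h1 : IsClosed {μ : Fin n → ℝ | ∀ i, 0 ≤ μ i} := by
      rw [Set.setOf_forall]
      exact isClosed_iInter fun i => isClosed_le continuous_const (continuous_apply i)
    have h2 : IsClosed {μ : Fin n → ℝ | ∀ k : ℕ, k < n →
        0 ≤ ∑ i ∈ Finset.univ.filter (fun i : Fin n => (i : ℕ) < k), (ν - μ) i} := by
      rw [Set.setOf_forall]
      refine isClosed_iInter fun k => ?_
      rcases Nat.lt_or_ge k n with hk | hk
      · have he : {μ : Fin n → ℝ | k < n →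
            0 ≤ ∑ i ∈ Finset.univ.filter (fun i : Fin n => (i : ℕ) < k), (ν - μ) i}
            = {μ : Fin n → ℝ |
              0 ≤ ∑ i ∈ Finset.univ.filter (fun i : Fin n => (i : ℕ) < k), (ν - μ) i} := by
          ext μ; simp [hk]
        rw [he]
        exact isClosed_le continuous_const
          (continuous_finset_sum _ fun i _ => continuous_const.sub (continuous_apply i))
      · have he : {μ : Fin n → ℝ | k < n →
            0 ≤ ∑ i ∈ Finset.univ.filter (fun i : Fin n => (i : ℕ) < k), (ν - μ) i}
            = Set.univ := by
          ext μ; simp [Nat.not_lt.2 hk]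
        rw [he]
        exact isClosed_univ
    have h3 : IsClosed {μ : Fin n → ℝ | ∑ i, (ν - μ) i = 0} :=
      isClosed_eq (continuous_finset_sum _ fun i _ => continuous_const.sub (continuous_apply i))
        continuous_const
    have : feas ν = {μ : Fin n → ℝ | ∀ i, 0 ≤ μ i} ∩
        ({μ : Fin n → ℝ | ∀ k : ℕ, k < n →
          0 ≤ ∑ i ∈ Finset.univ.filter (fun i : Fin n => (i : ℕ) < k), (ν - μ) i} ∩
         {μ : Fin n → ℝ | ∑ i, (ν - μ) i = 0}) := by
      ext μ
      simp only [feas, majorCone, Set.mem_setOf_eq, Set.mem_inter_iff]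
    rw [this]
    exact h1.inter (h2.inter h3)
  exact IsCompact.of_isClosed_subset isCompact_Icc hclosed hsub

lemma feas_nonempty (hν : ν ∈ stdSimplex ℝ (Fin n)) : ν ∈ feas ν := by
  refine ⟨hν.1, ?_, ?_⟩
  · intro k hk
    simp
  · simp

lemma exists_min (hν : ν ∈ stdSimplex ℝ (Fin n)) :
    ∃ μ ∈ feas ν, ∀ μ' ∈ feas ν, ∑ i, (μ i)^2 ≤ ∑ i, (μ' i)^2 := by
  obtain ⟨μ, hμ, hmin⟩ := (feas_isCompact ν hν).exists_isMinOn ⟨ν, feas_nonempty ν hν⟩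
    ((continuous_finset_sum _ fun i _ => (continuous_apply i).pow 2).continuousOn)
  exact ⟨μ, hμ, fun μ' hμ' => hmin hμ'⟩

end MinPart

section Perturb

variable {n : ℕ} (ν : Fin n → ℝ)

lemma update2_feas_aux {μ : Fin n → ℝ} (hμ : μ ∈ feas ν) {k : ℕ} (hk : k + 1 < n)
    (a b : ℝ) (ha : 0 ≤ a) (hb : 0 ≤ b)
    (habsum : a + b = μ ⟨k, by omega⟩ + μ ⟨k+1, hk⟩)
    (hstep : a - μ ⟨k, by omega⟩ ≤ ∑ i ∈ Finset.univ.filter (fun i : Fin n => (i : ℕ) < k+1), (ν - μ) i) :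
    (Function.update (Function.update μ ⟨k, by omega⟩ a) ⟨k+1, hk⟩ b) ∈ feas ν := by
  set i₀ : Fin n := ⟨k, by omega⟩ with hi₀
  set i₁ : Fin n := ⟨k+1, hk⟩ with hi₁
  have hne : i₀ ≠ i₁ := by
    intro h
    have := congrArg Fin.val h
    simp [hi₀, hi₁] at this
  set μ' := Function.update (Function.update μ i₀ a) i₁ b with hμ'
  have hsum : ∀ S : Finset (Fin n), ∑ i ∈ S, μ' i = ∑ i ∈ S, μ i
      + (if i₀ ∈ S then a - μ i₀ else 0) + (if i₁ ∈ S then b - μ i₁ else 0) := by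
    intro S
    exact sum_update_two (fun x => x) μ hne a b S
  refine ⟨?_, ?_, ?_⟩
  · intro i
    rw [hμ']
    rcases eq_or_ne i i₁ with h | h
    · rw [h, Function.update_self]; exact hb
    · rw [Function.update_of_ne h]
      rcases eq_or_ne i i₀ with h0 | h0
      · rw [h0, Function.update_self]; exact ha
      · rw [Function.update_of_ne h0]; exact hμ.1 i
  · intro m hm
    have hold := hμ.2.1 m hm
    simp only [Pi.sub_apply] at hold ⊢
    rw [Finset.sum_sub_distrib] at hold ⊢
    rw [hsum]
    have hmem0 : i₀ ∈ Finset.univ.filter (fun i : Fin n => (i : ℕ) < m) ↔ k < m := by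
      simp [hi₀]
    have hmem1 : i₁ ∈ Finset.univ.filter (fun i : Fin n => (i : ℕ) < m) ↔ k + 1 < m := by
      simp [hi₁]
    by_cases h1 : k + 1 < m
    · have h0 : k < m := by omega
      rw [if_pos (hmem0.2 h0), if_pos (hmem1.2 h1)]
      have : a - μ i₀ + (b - μ i₁) = 0 := by rw [hi₀, hi₁] at habsum ⊢; linarith
      linarith
    · rw [if_neg (fun hc => h1 (hmem1.1 hc))]
      by_cases h0 : k < m
      · rw [if_pos (hmem0.2 h0)]
        have hm1 : m = k + 1 := by omega
        subst hm1
        have hstep' := hstep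
        simp only [Pi.sub_apply] at hstep'
        rw [Finset.sum_sub_distrib] at hstep'
        rw [hi₀] at hstep' ⊢
        linarith
      · rw [if_neg (fun hc => h0 (hmem0.1 hc))]
        linarith
  · have hold := hμ.2.2
    simp only [Pi.sub_apply] at hold ⊢
    rw [Finset.sum_sub_distrib] at hold ⊢
    rw [hsum]
    rw [if_pos (Finset.mem_univ i₀), if_pos (Finset.mem_univ i₁)]
    have : a - μ i₀ + (b - μ i₁) = 0 := by rw [hi₀, hi₁] at habsum ⊢; linarith
    linarith

lemma min_mono {μ : Fin n → ℝ} (hμ : μ ∈ feas ν)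
    (hmin : ∀ μ' ∈ feas ν, ∑ i, (μ i)^2 ≤ ∑ i, (μ' i)^2)
    {k : ℕ} (hk : k + 1 < n) : μ ⟨k, by omega⟩ ≤ μ ⟨k+1, hk⟩ := by
  by_contra hcon
  push_neg at hcon
  set i₀ : Fin n := ⟨k, by omega⟩ with hi₀
  set i₁ : Fin n := ⟨k+1, hk⟩ with hi₁
  have hne : i₀ ≠ i₁ := by
    intro h; have := congrArg Fin.val h; simp [hi₀, hi₁] at this
  set a := (μ i₀ + μ i₁) / 2 with ha_def
  have ha : 0 ≤ a := by
    have := hμ.1 i₀; have := hμ.1 i₁; rw [ha_def]; linarith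
  have hfeas' : (Function.update (Function.update μ i₀ a) i₁ a) ∈ feas ν := by
    apply update2_feas_aux ν hμ hk a a ha ha (by rw [ha_def]; ring)
    have hold := hμ.2.1 (k+1) (by omega)
    have : a - μ i₀ ≤ 0 := by rw [ha_def]; linarith
    linarith
  have hobj := hmin _ hfeas'
  rw [sum_update_two (fun x => x^2) μ hne a a Finset.univ] at hobj
  rw [if_pos (Finset.mem_univ i₀), if_pos (Finset.mem_univ i₁)] at hobj
  nlinarith [sq_nonneg (μ i₀ - μ i₁)]

lemma min_slack {μ : Fin n → ℝ} (hμ : μ ∈ feas ν)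
    (hmin : ∀ μ' ∈ feas ν, ∑ i, (μ i)^2 ≤ ∑ i, (μ' i)^2)
    {k : ℕ} (hk : k + 1 < n) (hlt : μ ⟨k, by omega⟩ < μ ⟨k+1, hk⟩) :
    ∑ i ∈ Finset.univ.filter (fun i : Fin n => (i : ℕ) < k+1), (ν - μ) i ≤ 0 := by
  by_contra hcon
  push_neg at hcon
  set i₀ : Fin n := ⟨k, by omega⟩ with hi₀
  set i₁ : Fin n := ⟨k+1, hk⟩ with hi₁
  have hne : i₀ ≠ i₁ := by
    intro h; have := congrArg Fin.val h; simp [hi₀, hi₁] at this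
  set S := ∑ i ∈ Finset.univ.filter (fun i : Fin n => (i : ℕ) < k+1), (ν - μ) i with hS
  set ε := min S ((μ i₁ - μ i₀)/2) with hε_def
  have hε : 0 < ε := lt_min hcon (by rw [hi₀, hi₁] at hlt ⊢; linarith)
  have hε2 : ε ≤ (μ i₁ - μ i₀)/2 := min_le_right _ _
  have hfeas' : (Function.update (Function.update μ i₀ (μ i₀ + ε)) i₁ (μ i₁ - ε)) ∈ feas ν := by
    apply update2_feas_aux ν hμ hk _ _ (by have := hμ.1 i₀; rw [hi₀] at this ⊢; linarith)
      (by have h0 := hμ.1 i₀; have h1 := hμ.1 i₁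
          have hlt' : μ i₀ < μ i₁ := hlt
          show 0 ≤ μ i₁ - ε
          linarith)
      (by rw [hi₀, hi₁]; ring)
    have : ε ≤ S := min_le_left _ _
    rw [hi₀]
    linarith
  have hobj := hmin _ hfeas'
  rw [sum_update_two (fun x => x^2) μ hne _ _ Finset.univ] at hobj
  rw [if_pos (Finset.mem_univ i₀), if_pos (Finset.mem_univ i₁)] at hobj
  nlinarith [hε, hε2]

end Perturb

section Pairing

lemma ereal_sum_ne_bot {α : Type*} {s : Finset α} {f : α → EReal}
    (h : ∀ i ∈ s, f i ≠ ⊥) : ∑ i ∈ s, f i ≠ ⊥ := by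
  classical
  induction s using Finset.induction_on with
  | empty => simp
  | @insert a s' hmem ih =>
    rw [Finset.sum_insert hmem]
    intro hc
    rcases EReal.add_eq_bot_iff.1 hc with h1 | h1
    · exact h a (Finset.mem_insert_self a s') h1
    · exact ih (fun i hi => h i (Finset.mem_insert_of_mem hi)) h1

lemma ereal_sum_eq_bot {α : Type*} {s : Finset α} {f : α → EReal} {i0 : α}
    (hi0 : i0 ∈ s) (h : f i0 = ⊥) : ∑ i ∈ s, f i = ⊥ := by
  classical
  rw [← Finset.add_sum_erase s f hi0, h, EReal.bot_add]

lemma ereal_sum_eq_top {α : Type*} {s : Finset α} {f : α → EReal} {i0 : α}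
    (hi0 : i0 ∈ s) (h : f i0 = ⊤) (hb : ∀ i ∈ s, f i ≠ ⊥) : ∑ i ∈ s, f i = ⊤ := by
  classical
  rw [← Finset.add_sum_erase s f hi0, h]
  exact EReal.top_add_of_ne_bot
    (ereal_sum_ne_bot fun i hi => hb i (Finset.mem_of_mem_erase hi))

lemma filter_sum_eq {n : ℕ} (f : Fin n → ℝ) (m : ℕ) (hm : m ≤ n) :
    ∑ i ∈ Finset.univ.filter (fun i : Fin n => (i : ℕ) < m), f i
      = ∑ j ∈ Finset.range m, (if h : j < n then f ⟨j, h⟩ else 0) := by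
  rw [Finset.sum_filter]
  have h1 : ∑ i : Fin n, (if (i : ℕ) < m then f i else 0)
      = ∑ j ∈ Finset.range n, (fun j => if j < m then (if h : j < n then f ⟨j, h⟩ else 0) else 0) j := by
    rw [← Fin.sum_univ_eq_sum_range]
    apply Finset.sum_congr rfl
    intro i _
    by_cases h : (i : ℕ) < m
    · rw [if_pos h, if_pos h, dif_pos i.isLt]
    · rw [if_neg h, if_neg h]
  rw [h1]
  rw [← Finset.sum_subset (Finset.range_subset_range.2 hm)
    (fun j _ hjm => if_neg (fun hc => hjm (Finset.mem_range.2 hc)))]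
  apply Finset.sum_congr rfl
  intro j hj
  rw [if_pos (Finset.mem_range.1 hj)]

lemma pairing_nonpos {n : ℕ} (hn : 1 ≤ n) (x : Fin n → ℝ)
    (hx1 : ∀ k : ℕ, k < n → 0 ≤ ∑ i ∈ Finset.univ.filter (fun i : Fin n => (i : ℕ) < k), x i)
    (hx2 : ∑ i, x i = 0) (l : Fin n → ℝ) (hl : Monotone l) :
    ∑ i, x i * l i ≤ 0 := by
  set X : ℕ → ℝ := fun j => if h : j < n then x ⟨j, h⟩ else 0 with hX
  set Λ : ℕ → ℝ := fun j => l ⟨min j (n-1), by omega⟩ with hΛ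
  have hsum : ∑ i, x i * l i = ∑ k ∈ Finset.range n, X k * Λ k := by
    rw [← Fin.sum_univ_eq_sum_range (fun j => X j * Λ j)]
    apply Finset.sum_congr rfl
    intro i _
    rw [hX, hΛ]
    simp only [dif_pos i.isLt]
    have hmin : min (i : ℕ) (n-1) = (i : ℕ) := min_eq_left (by omega)
    have : (⟨min (i : ℕ) (n-1), by omega⟩ : Fin n) = i := Fin.ext hmin
    rw [this]
  have hSn : ∑ j ∈ Finset.range n, X j = 0 := by
    rw [← Fin.sum_univ_eq_sum_range X, ← hx2]
    apply Finset.sum_congr rfl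
    intro i _
    rw [hX]; simp only [dif_pos i.isLt]
  have hSk : ∀ k : ℕ, k ≤ n → ∑ j ∈ Finset.range k, X j
      = ∑ i ∈ Finset.univ.filter (fun i : Fin n => (i : ℕ) < k), x i := by
    intro k hk
    rw [filter_sum_eq x k hk]
  rw [hsum, abelIdentity n X Λ]
  have hterm : ∀ k ∈ Finset.range n, (∑ j ∈ Finset.range (k+1), X j) * (Λ k - Λ (k+1)) ≤ 0 := by
    intro k hk
    rw [Finset.mem_range] at hk
    rcases eq_or_lt_of_le (Nat.succ_le_of_lt hk) with h | h
    · have h' : k + 1 = n := h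
      have hS1 : ∑ j ∈ Finset.range (k+1), X j = 0 := by rw [h', hSn]
      rw [hS1]
      simp
    · have hS := hx1 (k+1) h
      rw [← hSk (k+1) (by omega)] at hS
      have hΛle : Λ k ≤ Λ (k+1) := by
        rw [hΛ]
        apply hl
        simp only [Fin.mk_le_mk]
        omega
      nlinarith
  calc (∑ k ∈ Finset.range n, (∑ j ∈ Finset.range (k+1), X j) * (Λ k - Λ (k+1)))
        + (∑ j ∈ Finset.range n, X j) * Λ n
      ≤ 0 + (∑ j ∈ Finset.range n, X j) * Λ n := by
        gcongr ?_ + _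
        exact Finset.sum_nonpos hterm
    _ = 0 := by rw [hSn]; ring

lemma pairing_zero {n : ℕ} (hn : 1 ≤ n) (x : Fin n → ℝ)
    (hx1 : ∀ k : ℕ, k < n → 0 ≤ ∑ i ∈ Finset.univ.filter (fun i : Fin n => (i : ℕ) < k), x i)
    (hx2 : ∑ i, x i = 0) (l : Fin n → ℝ)
    (hslack : ∀ k : ℕ, (hk : k + 1 < n) →
      0 < ∑ i ∈ Finset.univ.filter (fun i : Fin n => (i : ℕ) < k+1), x i →
      l ⟨k, by omega⟩ = l ⟨k+1, hk⟩) :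
    ∑ i, x i * l i = 0 := by
  set X : ℕ → ℝ := fun j => if h : j < n then x ⟨j, h⟩ else 0 with hX
  set Λ : ℕ → ℝ := fun j => l ⟨min j (n-1), by omega⟩ with hΛ
  have hsum : ∑ i, x i * l i = ∑ k ∈ Finset.range n, X k * Λ k := by
    rw [← Fin.sum_univ_eq_sum_range (fun j => X j * Λ j)]
    apply Finset.sum_congr rfl
    intro i _
    rw [hX, hΛ]
    simp only [dif_pos i.isLt]
    have hmin : min (i : ℕ) (n-1) = (i : ℕ) := min_eq_left (by omega)
    have : (⟨min (i : ℕ) (n-1), by omega⟩ : Fin n) = i := Fin.ext hmin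
    rw [this]
  have hSn : ∑ j ∈ Finset.range n, X j = 0 := by
    rw [← Fin.sum_univ_eq_sum_range X, ← hx2]
    apply Finset.sum_congr rfl
    intro i _
    rw [hX]; simp only [dif_pos i.isLt]
  have hSk : ∀ k : ℕ, k ≤ n → ∑ j ∈ Finset.range k, X j
      = ∑ i ∈ Finset.univ.filter (fun i : Fin n => (i : ℕ) < k), x i := by
    intro k hk
    rw [filter_sum_eq x k hk]
  rw [hsum, abelIdentity n X Λ]
  have hterm : ∀ k ∈ Finset.range n, (∑ j ∈ Finset.range (k+1), X j) * (Λ k - Λ (k+1)) = 0 := by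
    intro k hk
    rw [Finset.mem_range] at hk
    rcases eq_or_lt_of_le (Nat.succ_le_of_lt hk) with h | h
    · have h' : k + 1 = n := h
      have : ∑ j ∈ Finset.range (k+1), X j = 0 := by rw [h', hSn]
      rw [this]; ring
    · have hS := hx1 (k+1) h
      rw [← hSk (k+1) (by omega)] at hS
      rcases eq_or_lt_of_le hS with hS0 | hS0
      · rw [← hS0]; ring
      · have : Λ k = Λ (k+1) := by
          rw [hΛ]
          have hmk : min k (n-1) = k := min_eq_left (by omega)
          have hmk1 : min (k+1) (n-1) = k+1 := min_eq_left (by omega)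
          have := hslack k h (by rw [← hSk (k+1) (by omega)]; exact hS0)
          convert this using 2 <;> simp [hmk, hmk1]
        rw [this]; ring
  rw [Finset.sum_congr rfl hterm]
  rw [hSn]
  simp

end Pairing

section Duality

variable {n : ℕ} (φ : ℝ → EReal) (φstar : ℝ → EReal)

lemma star_ge (hφstar : φstar = fun s => ⨆ t ∈ Set.Ici (0 : ℝ), ((t * s : ℝ) : EReal) - φ t)
    (s t : ℝ) (ht : 0 ≤ t) : ((t * s : ℝ) : EReal) - φ t ≤ φstar s := by
  rw [hφstar]
  exact le_iSup₂ (f := fun t (_ : t ∈ Set.Ici (0:ℝ)) => ((t * s : ℝ) : EReal) - φ t) t ht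

lemma star_ne_bot (hφ_one : φ 1 = 0)
    (hφstar : φstar = fun s => ⨆ t ∈ Set.Ici (0 : ℝ), ((t * s : ℝ) : EReal) - φ t)
    (s : ℝ) : φstar s ≠ ⊥ := by
  have h := star_ge φ φstar hφstar s 1 zero_le_one
  rw [hφ_one] at h
  simp only [one_mul] at h
  intro hc
  rw [hc, le_bot_iff] at h
  exact EReal.coe_ne_bot s (by simpa using h)

lemma weak_core (hn : 1 ≤ n)
    (hφ_bot : ∀ t : ℝ, φ t ≠ ⊥) (hφ_one : φ 1 = 0)
    (hφstar : φstar = fun s => ⨆ t ∈ Set.Ici (0 : ℝ), ((t * s : ℝ) : EReal) - φ t)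
    (ν : Fin n → ℝ) (μ : Fin n → ℝ) (hμ : μ ∈ feas ν)
    (l : Fin n → ℝ) (hl : Monotone l) :
    ∑ i, (((ν i * l i : ℝ) : EReal) - (((n : ℝ)⁻¹ : ℝ) : EReal) * φstar (l i))
      ≤ (((n : ℝ)⁻¹ : ℝ) : EReal) * ∑ i, φ (n * μ i) := by
  have hn0 : (0:ℝ) < n := by exact_mod_cast hn
  have hq : (0:ℝ) < (n:ℝ)⁻¹ := by positivity
  by_cases hA : ∃ i, φstar (l i) = ⊤
  · obtain ⟨i0, hi0⟩ := hA
    have hterm : ((ν i0 * l i0 : ℝ) : EReal) - (((n : ℝ)⁻¹ : ℝ) : EReal) * φstar (l i0) = ⊥ := by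
      rw [hi0, EReal.coe_mul_top_of_pos hq, EReal.sub_top]
    rw [ereal_sum_eq_bot (Finset.mem_univ i0) hterm]
    exact bot_le
  · push_neg at hA
    have hGr : ∀ i, φstar (l i) = (((φstar (l i)).toReal : ℝ) : EReal) := fun i =>
      (EReal.coe_toReal (hA i) (star_ne_bot φ φstar hφ_one hφstar (l i))).symm
    set G : Fin n → ℝ := fun i => (φstar (l i)).toReal with hG
    by_cases hB : ∃ i, φ ((n:ℝ) * μ i) = ⊤
    · obtain ⟨i0, hi0⟩ := hB
      have : ∑ i, φ ((n:ℝ) * μ i) = ⊤ :=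
        ereal_sum_eq_top (Finset.mem_univ i0) hi0 (fun i _ => hφ_bot _)
      rw [this, EReal.coe_mul_top_of_pos hq]
      exact le_top
    · push_neg at hB
      have hFr : ∀ i, φ ((n:ℝ) * μ i) = (((φ ((n:ℝ) * μ i)).toReal : ℝ) : EReal) := fun i =>
        (EReal.coe_toReal (hB i) (hφ_bot _)).symm
      set F : Fin n → ℝ := fun i => (φ ((n:ℝ) * μ i)).toReal with hF
      -- key per-coordinate Fenchel-Young inequality, real form
      have hkey : ∀ i, (n:ℝ) * μ i * l i - F i ≤ G i := by
        intro i
        have h := star_ge φ φstar hφstar (l i) ((n:ℝ) * μ i)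
          (mul_nonneg hn0.le (hμ.1 i))
        rw [hFr i, ← EReal.coe_sub, hGr i, EReal.coe_le_coe_iff] at h
        exact h
      -- pairing inequality
      have hpair : ∑ i, (ν i - μ i) * l i ≤ 0 := by
        have h1 := hμ.2.1
        have h2 := hμ.2.2
        simp only [Pi.sub_apply] at h1 h2
        exact pairing_nonpos hn (fun i => ν i - μ i) h1 h2 l hl
      -- assemble
      have hL : ∑ i, (((ν i * l i : ℝ) : EReal) - (((n : ℝ)⁻¹ : ℝ) : EReal) * φstar (l i))
          = ((∑ i, (ν i * l i - (n:ℝ)⁻¹ * G i) : ℝ) : EReal) := by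
        rw [erealCoeSum]
        apply Finset.sum_congr rfl
        intro i _
        rw [hGr i, ← EReal.coe_mul, ← EReal.coe_sub]
      have hR : (((n : ℝ)⁻¹ : ℝ) : EReal) * ∑ i, φ ((n:ℝ) * μ i)
          = (((n:ℝ)⁻¹ * ∑ i, F i : ℝ) : EReal) := by
        rw [EReal.coe_mul]
        congr 1
        rw [erealCoeSum]
        apply Finset.sum_congr rfl
        intro i _
        exact hFr i
      rw [hL, hR, EReal.coe_le_coe_iff]
      have step1 : ∑ i, (ν i * l i - (n:ℝ)⁻¹ * G i) ≤ ∑ i, (μ i * l i - (n:ℝ)⁻¹ * G i) := by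
        have : ∑ i, (ν i * l i - (n:ℝ)⁻¹ * G i) - ∑ i, (μ i * l i - (n:ℝ)⁻¹ * G i)
            = ∑ i, (ν i - μ i) * l i := by
          rw [← Finset.sum_sub_distrib]
          apply Finset.sum_congr rfl
          intro i _; ring
        linarith [hpair, this]
      refine step1.trans ?_
      rw [Finset.mul_sum]
      apply Finset.sum_le_sum
      intro i _
      have := hkey i
      have hne : (n:ℝ) ≠ 0 := ne_of_gt hn0
      have h2 : (n:ℝ)⁻¹ * ((n:ℝ) * μ i * l i - F i) ≤ (n:ℝ)⁻¹ * G i :=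
        mul_le_mul_of_nonneg_left this hq.le
      have h3 : (n:ℝ)⁻¹ * ((n:ℝ) * μ i * l i - F i) = μ i * l i - (n:ℝ)⁻¹ * F i := by
        field_simp
      linarith [h2, h3 ▸ h2]

end Duality

section Strong

variable {n : ℕ}

lemma strong_core (hn : 1 ≤ n) (φ : ℝ → EReal)
    (hφ_bot : ∀ t : ℝ, φ t ≠ ⊥)
    (hφ_conv : ∀ x y a b : ℝ, 0 ≤ a → 0 ≤ b → a + b = 1 →
      φ (a * x + b * y) ≤ (a : EReal) * φ x + (b : EReal) * φ y)
    (hφ_lsc : LowerSemicontinuous φ)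
    (hφ_one : φ 1 = 0)
    (hφ_fin : ∀ t : ℝ, 0 < t → φ t ≠ ⊤)
    (φstar : ℝ → EReal)
    (hφstar : φstar = fun s => ⨆ t ∈ Set.Ici (0 : ℝ), ((t * s : ℝ) : EReal) - φ t)
    (ν : Fin n → ℝ) (hν : ν ∈ stdSimplex ℝ (Fin n)) :
    ∃ μ ∈ feas ν, (((n : ℝ)⁻¹ : ℝ) : EReal) * ∑ i, φ (n * μ i)
      ≤ ⨆ l ∈ {l : Fin n → ℝ | Monotone l},
          ∑ i, (((ν i * l i : ℝ) : EReal) - (((n : ℝ)⁻¹ : ℝ) : EReal) * φstar (l i)) := by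
  classical
  obtain ⟨μ, hμ, hmin⟩ := exists_min ν hν
  refine ⟨μ, hμ, ?_⟩
  set D := ⨆ l ∈ {l : Fin n → ℝ | Monotone l},
      ∑ i, (((ν i * l i : ℝ) : EReal) - (((n : ℝ)⁻¹ : ℝ) : EReal) * φstar (l i)) with hD
  have hn0 : (0:ℝ) < n := by exact_mod_cast hn
  have hq : (0:ℝ) < (n:ℝ)⁻¹ := by positivity
  set q : ℝ := (n:ℝ)⁻¹ with hq_def
  -- monotonicity of μ
  have hadj : ∀ k : ℕ, (hk : k + 1 < n) → μ ⟨k, by omega⟩ ≤ μ ⟨k+1, hk⟩ :=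
    fun k hk => min_mono ν hμ hmin hk
  have hmono : ∀ i j : Fin n, i ≤ j → μ i ≤ μ j := by
    have hm : Monotone (fun k : ℕ => μ ⟨min k (n-1), by omega⟩) := by
      apply monotone_nat_of_le_succ
      intro k
      by_cases hk : k + 1 ≤ n - 1
      · have e1 : min k (n-1) = k := min_eq_left (by omega)
        have e2 : min (k+1) (n-1) = k+1 := min_eq_left (by omega)
        have hkn : k + 1 < n := by omega
        have := hadj k hkn
        show μ ⟨min k (n-1), by omega⟩ ≤ μ ⟨min (k+1) (n-1), by omega⟩
        rw [show (⟨min k (n-1), by omega⟩ : Fin n) = ⟨k, by omega⟩ from Fin.ext e1,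
          show (⟨min (k+1) (n-1), by omega⟩ : Fin n) = ⟨k+1, hkn⟩ from Fin.ext e2]
        exact this
      · have e1 : min k (n-1) = min (k+1) (n-1) := by omega
        exact le_of_eq (congrArg μ (Fin.ext e1))
    intro i j hij
    have h1 := hm (show (i:ℕ) ≤ (j:ℕ) from hij)
    have e1 : min (i:ℕ) (n-1) = (i:ℕ) := min_eq_left (by omega)
    have e2 : min (j:ℕ) (n-1) = (j:ℕ) := min_eq_left (by omega)
    simpa [e1, e2, Fin.eta] using h1
  -- zero coordinates of μ force zero coordinates of ν
  have hsum1 : ∑ i, μ i = 1 := sum_eq_one_of_feas ν hν hμ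
  have hzero : ∀ i, μ i = 0 → ν i = 0 := by
    intro i hi
    set Z' := Finset.univ.filter (fun j : Fin n => μ j = 0) with hZ'
    have hiZ : i ∈ Z' := by simp [hZ', hi]
    have hne : Z'.Nonempty := ⟨i, hiZ⟩
    set k0 := Z'.max' hne with hk0
    have hk0mem : k0 ∈ Z' := Z'.max'_mem hne
    have hk0z : μ k0 = 0 := by
      have := hk0mem
      simp [hZ'] at this
      exact this
    have hk0lt : (k0 : ℕ) + 1 < n := by
      by_contra hc
      have hk0top : (k0 : ℕ) = n - 1 := by omega
      have hall : ∀ j : Fin n, μ j = 0 := by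
        intro j
        have hjle : j ≤ k0 := by
          rw [Fin.le_def, hk0top]; omega
        exact le_antisymm (by rw [← hk0z]; exact hmono j k0 hjle) (hμ.1 j)
      rw [Finset.sum_congr rfl (fun j _ => hall j)] at hsum1
      simp at hsum1
    have hnextpos : 0 < μ ⟨(k0:ℕ)+1, hk0lt⟩ := by
      rcases lt_or_eq_of_le (hμ.1 ⟨(k0:ℕ)+1, hk0lt⟩) with h | h
      · exact h
      · exfalso
        have hmem : (⟨(k0:ℕ)+1, hk0lt⟩ : Fin n) ∈ Z' := by simp [hZ', h.symm]
        have := Z'.le_max' _ hmem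
        rw [← hk0] at this
        have : (k0:ℕ) + 1 ≤ (k0:ℕ) := this
        omega
    have hlt : μ ⟨(k0:ℕ), by omega⟩ < μ ⟨(k0:ℕ)+1, hk0lt⟩ := by
      have : μ ⟨(k0:ℕ), by omega⟩ = 0 := by
        rw [show (⟨(k0:ℕ), by omega⟩ : Fin n) = k0 from Fin.ext rfl]
        exact hk0z
      rw [this]; exact hnextpos
    have hS0 := min_slack ν hμ hmin hk0lt hlt
    have hSge := hμ.2.1 ((k0:ℕ)+1) hk0lt
    have hSeq : ∑ j ∈ Finset.univ.filter (fun j : Fin n => (j:ℕ) < (k0:ℕ)+1), (ν - μ) j = 0 :=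
      le_antisymm hS0 hSge
    have hμzero : ∀ j ∈ Finset.univ.filter (fun j : Fin n => (j:ℕ) < (k0:ℕ)+1), μ j = 0 := by
      intro j hj
      simp only [Finset.mem_filter] at hj
      have hjle : j ≤ k0 := by rw [Fin.le_def]; omega
      exact le_antisymm (by rw [← hk0z]; exact hmono j k0 hjle) (hμ.1 j)
    have hνsum : ∑ j ∈ Finset.univ.filter (fun j : Fin n => (j:ℕ) < (k0:ℕ)+1), ν j = 0 := by
      have : ∑ j ∈ Finset.univ.filter (fun j : Fin n => (j:ℕ) < (k0:ℕ)+1), (ν - μ) j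
          = ∑ j ∈ Finset.univ.filter (fun j : Fin n => (j:ℕ) < (k0:ℕ)+1), ν j
            - ∑ j ∈ Finset.univ.filter (fun j : Fin n => (j:ℕ) < (k0:ℕ)+1), μ j := by
        simp only [Pi.sub_apply]
        rw [Finset.sum_sub_distrib]
      rw [this, Finset.sum_eq_zero hμzero] at hSeq
      linarith
    have hiFilter : i ∈ Finset.univ.filter (fun j : Fin n => (j:ℕ) < (k0:ℕ)+1) := by
      have := Z'.le_max' i hiZ
      rw [← hk0] at this
      simp only [Finset.mem_filter, Finset.mem_univ, true_and]
      have : (i:ℕ) ≤ (k0:ℕ) := this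
      omega
    have := (Finset.sum_eq_zero_iff_of_nonneg (fun j _ => hν.1 j)).1 hνsum i hiFilter
    exact this
  -- the dual candidate family
  set R0 : ℝ := ∑ i, |leftD φ ((n:ℝ) * μ i)| with hR0_def
  have hR0 : ∀ i : Fin n, -leftD φ ((n:ℝ) * μ i) ≤ R0 := by
    intro i
    have h1 : |leftD φ ((n:ℝ) * μ i)| ≤ R0 :=
      Finset.single_le_sum (f := fun i => |leftD φ ((n:ℝ) * μ i)|)
        (fun j _ => abs_nonneg _) (Finset.mem_univ i)
    have := neg_le_abs (leftD φ ((n:ℝ) * μ i))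
    linarith
  set lam : ℝ → Fin n → ℝ :=
    fun r i => if μ i ≤ 0 then -r else leftD φ ((n:ℝ) * μ i) with hlam_def
  have hlam_eq : ∀ r, ∀ i j : Fin n, μ i = μ j → lam r i = lam r j := by
    intro r i j hij
    rw [hlam_def]
    simp only [hij]
  have hlam_mono : ∀ r, R0 ≤ r → Monotone (lam r) := by
    intro r hr i j hij
    have hmuij := hmono i j hij
    rw [hlam_def]
    simp only
    by_cases hi : μ i ≤ 0
    · by_cases hj : μ j ≤ 0
      · rw [if_pos hi, if_pos hj]
      · rw [if_pos hi, if_neg hj]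
        have := hR0 j
        linarith
    · by_cases hj : μ j ≤ 0
      · exact absurd (hmuij.trans hj) hi
      · rw [if_neg hi, if_neg hj]
        push_neg at hi hj
        rcases eq_or_lt_of_le hmuij with h | h
        · rw [h]
        · exact leftD_mono φ hφ_bot hφ_conv hφ_fin (by positivity)
            (by have := mul_lt_mul_of_pos_left h hn0; linarith)
  have hpair : ∀ r, ∑ i, (ν i - μ i) * lam r i = 0 := by
    intro r
    have h1 := hμ.2.1
    have h2 := hμ.2.2
    simp only [Pi.sub_apply] at h1 h2
    apply pairing_zero hn (fun i => ν i - μ i) h1 h2 (lam r)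
    intro k hk hpos
    have hnlt : ¬ μ ⟨k, by omega⟩ < μ ⟨k+1, hk⟩ := by
      intro hlt
      have := min_slack ν hμ hmin hk hlt
      simp only [Pi.sub_apply] at this hpos
      linarith
    have heq : μ ⟨k, by omega⟩ = μ ⟨k+1, hk⟩ := le_antisymm (hadj k hk) (not_lt.1 hnlt)
    exact hlam_eq r _ _ heq
  -- partition
  set Zs := Finset.univ.filter (fun i : Fin n => μ i ≤ 0) with hZs
  set Ps := Finset.univ.filter (fun i : Fin n => ¬ μ i ≤ 0) with hPs
  have hμZ : ∀ i ∈ Zs, μ i = 0 := by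
    intro i hi
    simp only [hZs, Finset.mem_filter] at hi
    exact le_antisymm hi.2 (hμ.1 i)
  have hμP : ∀ i ∈ Ps, 0 < μ i := by
    intro i hi
    simp only [hPs, Finset.mem_filter] at hi
    exact lt_of_not_ge hi.2
  set A : ℝ := ∑ i ∈ Ps, fR φ ((n:ℝ) * μ i) with hA_def
  set z : ℝ := (Zs.card : ℝ) with hz_def
  -- main lower bound on D
  have hDge : ∀ c : ℝ, (c : EReal) < φ 0 → ((q * (A + z * c) : ℝ) : EReal) ≤ D := by
    intro c hc
    obtain ⟨M, hM⟩ := phistar_neg_bound φ hφ_bot hφ_conv hφ_fin hφ_lsc hφ_one hc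
    set r := max M R0 with hr_def
    have hstar_neg : φstar (-r) ≤ ((-c : ℝ) : EReal) := by
      rw [hφstar]
      exact hM r (le_max_left _ _)
    set l := lam r with hl_def
    have hlmem : l ∈ {l : Fin n → ℝ | Monotone l} := hlam_mono r (le_max_right _ _)
    -- value of each term
    have htermP : ∀ i ∈ Ps, (((ν i * l i : ℝ) : EReal) - ((q : ℝ) : EReal) * φstar (l i))
        = ((ν i * l i - q * ((n:ℝ) * μ i * l i - fR φ ((n:ℝ) * μ i)) : ℝ) : EReal) := by
      intro i hi
      have hμi : 0 < μ i := hμP i hi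
      have hli : l i = leftD φ ((n:ℝ) * μ i) := by
        rw [hl_def, hlam_def]
        simp only [if_neg (not_le.2 hμi)]
      have hti : (0:ℝ) < (n:ℝ) * μ i := by positivity
      have hstar : φstar (l i)
          = (((n:ℝ) * μ i * leftD φ ((n:ℝ) * μ i) - fR φ ((n:ℝ) * μ i) : ℝ) : EReal) := by
        rw [hli, hφstar]
        exact phistar_attain φ hφ_bot hφ_conv hφ_fin hti
      rw [hstar, hli, ← EReal.coe_mul, ← EReal.coe_sub]
    have htermZ : ∀ i ∈ Zs, ((q * c : ℝ) : EReal)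
        ≤ (((ν i * l i : ℝ) : EReal) - ((q : ℝ) : EReal) * φstar (l i)) := by
      intro i hi
      have hμi : μ i = 0 := hμZ i hi
      have hνi : ν i = 0 := hzero i hμi
      have hli : l i = -r := by
        rw [hl_def, hlam_def]
        simp only [if_pos (le_of_eq hμi)]
      have h1 : ((q : ℝ) : EReal) * φstar (l i) ≤ ((q * -c : ℝ) : EReal) := by
        rw [hli, EReal.coe_mul]
        exact mul_le_mul_of_nonneg_left hstar_neg (by exact_mod_cast hq.le)
      calc ((q * c : ℝ) : EReal) = ((ν i * l i : ℝ) : EReal) - ((q * -c : ℝ) : EReal) := by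
            rw [← EReal.coe_sub, EReal.coe_eq_coe_iff, hνi]
            ring
        _ ≤ (((ν i * l i : ℝ) : EReal) - ((q : ℝ) : EReal) * φstar (l i)) :=
            EReal.sub_le_sub le_rfl h1
    -- sum lower bound
    have hsplit : ∑ i, (((ν i * l i : ℝ) : EReal) - ((q : ℝ) : EReal) * φstar (l i))
        = (∑ i ∈ Zs, (((ν i * l i : ℝ) : EReal) - ((q : ℝ) : EReal) * φstar (l i)))
          + ∑ i ∈ Ps, (((ν i * l i : ℝ) : EReal) - ((q : ℝ) : EReal) * φstar (l i)) := by
      rw [hZs, hPs]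
      exact (Finset.sum_filter_add_sum_filter_not Finset.univ _ _).symm
    have hsumZ : ((z * (q * c) : ℝ) : EReal)
        ≤ ∑ i ∈ Zs, (((ν i * l i : ℝ) : EReal) - ((q : ℝ) : EReal) * φstar (l i)) := by
      calc ((z * (q * c) : ℝ) : EReal) = ((∑ _i ∈ Zs, q * c : ℝ) : EReal) := by
            rw [Finset.sum_const, nsmul_eq_mul, hz_def]
        _ = ∑ _i ∈ Zs, ((q * c : ℝ) : EReal) := erealCoeSum _ _
        _ ≤ _ := Finset.sum_le_sum htermZ
    have hsumP : ∑ i ∈ Ps, (((ν i * l i : ℝ) : EReal) - ((q : ℝ) : EReal) * φstar (l i))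
        = ((∑ i ∈ Ps, (ν i * l i - q * ((n:ℝ) * μ i * l i - fR φ ((n:ℝ) * μ i))) : ℝ) : EReal) := by
      rw [erealCoeSum]
      exact Finset.sum_congr rfl htermP
    -- real computation of the P-part
    have hPsreal : ∑ i ∈ Ps, (ν i * l i - q * ((n:ℝ) * μ i * l i - fR φ ((n:ℝ) * μ i)))
        = q * A := by
      have hterm : ∀ i ∈ Ps, ν i * l i - q * ((n:ℝ) * μ i * l i - fR φ ((n:ℝ) * μ i))
          = (ν i - μ i) * l i + q * fR φ ((n:ℝ) * μ i) := by
        intro i _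
        have : q * ((n:ℝ) * μ i * l i) = μ i * l i := by
          rw [hq_def]
          field_simp
        nlinarith [this]
      rw [Finset.sum_congr rfl hterm, Finset.sum_add_distrib, ← Finset.mul_sum, ← hA_def]
      have hZpart : ∑ i ∈ Zs, (ν i - μ i) * l i = 0 := by
        apply Finset.sum_eq_zero
        intro i hi
        rw [hzero i (hμZ i hi), hμZ i hi]
        ring
      have hall := hpair r
      have : (∑ i ∈ Zs, (ν i - μ i) * l i) + ∑ i ∈ Ps, (ν i - μ i) * l i
          = ∑ i, (ν i - μ i) * l i := by
        rw [hZs, hPs]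
        exact Finset.sum_filter_add_sum_filter_not Finset.univ _ _
      rw [hZpart, zero_add] at this
      rw [hl_def] at this ⊢
      rw [this, hall, zero_add]
    have hfinal : ((q * (A + z * c) : ℝ) : EReal)
        ≤ ∑ i, (((ν i * l i : ℝ) : EReal) - ((q : ℝ) : EReal) * φstar (l i)) := by
      rw [hsplit, hsumP, hPsreal]
      calc ((q * (A + z * c) : ℝ) : EReal) = ((z * (q * c) + q * A : ℝ) : EReal) := by
            rw [EReal.coe_eq_coe_iff]; ring
        _ = ((z * (q * c) : ℝ) : EReal) + ((q * A : ℝ) : EReal) := EReal.coe_add _ _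
        _ ≤ _ := add_le_add hsumZ le_rfl
    refine hfinal.trans ?_
    rw [hD]
    exact le_iSup₂ (f := fun l (_ : l ∈ {l : Fin n → ℝ | Monotone l}) =>
      ∑ i, (((ν i * l i : ℝ) : EReal) - ((q : ℝ) : EReal) * φstar (l i))) l hlmem
  -- conclude
  by_cases hZempty : Zs = ∅
  · -- all coordinates positive
    have hPuniv : Ps = Finset.univ := by
      rw [hPs]
      rw [Finset.filter_eq_self]
      intro i _
      intro hc
      have : i ∈ Zs := by simp [hZs, hc]
      rw [hZempty] at this
      exact absurd this (Finset.notMem_empty i)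
    have hLHS : ∑ i, φ ((n:ℝ) * μ i) = ((A : ℝ) : EReal) := by
      rw [hA_def, hPuniv, erealCoeSum]
      apply Finset.sum_congr rfl
      intro i hi
      have hμi : 0 < μ i := hμP i (hPuniv ▸ Finset.mem_univ i)
      exact phi_eq_coe φ hφ_bot hφ_fin (by positivity)
    obtain ⟨c, hc1, hc2⟩ := EReal.exists_between_coe_real (Ne.bot_lt (hφ_bot 0))
    have := hDge c hc2
    have hz0 : z = 0 := by rw [hz_def, hZempty]; simp
    rw [hz0] at this
    simp only [mul_zero, zero_mul, add_zero] at this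
    rw [hLHS, ← EReal.coe_mul]
    exact this
  · have hZne : Zs.Nonempty := Finset.nonempty_of_ne_empty hZempty
    have hzpos : 0 < z := by
      rw [hz_def]
      exact_mod_cast Finset.card_pos.2 hZne
    rcases eq_or_ne (φ 0) ⊤ with h0 | h0
    · -- dual is +infinity
      have hDtop : D = ⊤ := by
        rw [EReal.eq_top_iff_forall_lt]
        intro y
        have hc : ((( (n:ℝ) * (y+1) - A) / z : ℝ) : EReal) < φ 0 := by rw [h0]; exact EReal.coe_lt_top _
        have := hDge _ hc
        have harith : q * (A + z * (((n:ℝ) * (y+1) - A) / z)) = y + 1 := by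
          rw [hq_def]
          field_simp
          ring
        rw [harith] at this
        calc ((y:ℝ) : EReal) < ((y+1 : ℝ) : EReal) := by
              rw [EReal.coe_lt_coe_iff]; linarith
          _ ≤ D := this
      rw [hDtop]
      exact le_top
    · obtain ⟨f0, hf0⟩ : ∃ f0 : ℝ, φ 0 = (f0 : EReal) := by
        lift φ 0 to ℝ using ⟨h0, hφ_bot 0⟩ with f0
        exact ⟨f0, rfl⟩
      have hLHS : ∑ i, φ ((n:ℝ) * μ i) = ((A + z * f0 : ℝ) : EReal) := by
        have hsplit : ∑ i, φ ((n:ℝ) * μ i)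
            = (∑ i ∈ Zs, φ ((n:ℝ) * μ i)) + ∑ i ∈ Ps, φ ((n:ℝ) * μ i) := by
          rw [hZs, hPs]
          exact (Finset.sum_filter_add_sum_filter_not Finset.univ _ _).symm
        have hZsum : ∑ i ∈ Zs, φ ((n:ℝ) * μ i) = ((z * f0 : ℝ) : EReal) := by
          have : ∀ i ∈ Zs, φ ((n:ℝ) * μ i) = ((f0 : ℝ) : EReal) := by
            intro i hi
            rw [hμZ i hi, mul_zero, hf0]
          rw [Finset.sum_congr rfl this, ← erealCoeSum, Finset.sum_const, nsmul_eq_mul,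
            EReal.coe_eq_coe_iff, hz_def]
        have hPsum : ∑ i ∈ Ps, φ ((n:ℝ) * μ i) = ((A : ℝ) : EReal) := by
          rw [hA_def, erealCoeSum]
          apply Finset.sum_congr rfl
          intro i hi
          have hμi : 0 < μ i := hμP i hi
          exact phi_eq_coe φ hφ_bot hφ_fin (by positivity)
        rw [hsplit, hZsum, hPsum, ← EReal.coe_add, EReal.coe_eq_coe_iff]
        ring
      rw [hLHS, ← EReal.coe_mul]
      rw [← EReal.ge_of_forall_gt_iff_ge]
      intro w hw
      rw [EReal.coe_lt_coe_iff] at hw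
      have hzne : z ≠ 0 := ne_of_gt hzpos
      have hqn : q * (n:ℝ) = 1 := by
        rw [hq_def]
        exact inv_mul_cancel₀ (ne_of_gt hn0)
      set T : ℝ := q * (A + z * f0) with hT_def
      set c : ℝ := f0 - (T - w) * (n:ℝ) / z with hc_def
      have hcf0 : c < f0 := by
        rw [hc_def]
        have h1 : 0 < T - w := by rw [hT_def]; linarith
        have hpos : 0 < (T - w) * (n:ℝ) / z :=
          div_pos (mul_pos h1 hn0) hzpos
        linarith
      have h1 : z * c = z * f0 - (T - w) * (n:ℝ) := by
        rw [hc_def, mul_sub]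
        congr 1
        rw [mul_comm z _, div_mul_cancel₀ _ hzne]
      have h2 : q * ((T - w) * (n:ℝ)) = T - w := by
        rw [mul_comm q, mul_assoc, mul_comm (n:ℝ) q, hqn, mul_one]
      have harith : q * (A + z * c) = w := by
        calc q * (A + z * c) = q * A + q * (z * c) := by ring
          _ = q * A + q * (z * f0) - q * ((T - w) * (n:ℝ)) := by rw [h1]; ring
          _ = T - (T - w) := by rw [h2, hT_def]; ring
          _ = w := by ring
      have := hDge c (by rw [hf0, EReal.coe_lt_coe_iff]; exact hcf0)
      rw [harith] at this
      exact this

end Strong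

/-- strong duality for the adjusted `φ`-divergence. For a proper, convex, lsc
`φ : ℝ → ℝ ∪ {+∞}` with `φ(1) = 0`, `φ = +∞` on `(-∞,0)` and finite on `(0,∞)`, and
`φ*(s) = sup_{t ≥ 0} (t·s - φ(t))`, for every `ν ∈ Δ^n`:
`inf { (1/n) ∑ φ(n μ_i) : μ ≥ 0, ν - μ ∈ K^n } = sup_{λ nondecreasing} ∑ (ν_i λ_i - φ*(λ_i)/n)`. -/
theorem phi_divergence_duality (n : ℕ) (hn : 1 ≤ n) (φ : ℝ → EReal)
    (hφ_bot : ∀ t : ℝ, φ t ≠ ⊥)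
    (hφ_conv : ∀ x y a b : ℝ, 0 ≤ a → 0 ≤ b → a + b = 1 →
      φ (a * x + b * y) ≤ (a : EReal) * φ x + (b : EReal) * φ y)
    (hφ_lsc : LowerSemicontinuous φ)
    (hφ_one : φ 1 = 0)
    (hφ_neg : ∀ t : ℝ, t < 0 → φ t = ⊤)
    (hφ_fin : ∀ t : ℝ, 0 < t → φ t ≠ ⊤)
    (φstar : ℝ → EReal)
    (hφstar : φstar = fun s => ⨆ t ∈ Set.Ici (0 : ℝ), ((t * s : ℝ) : EReal) - φ t)
    (ν : Fin n → ℝ) (hν : ν ∈ stdSimplex ℝ (Fin n)) :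
    (⨅ μ ∈ {μ : Fin n → ℝ | (∀ i, 0 ≤ μ i) ∧ ν - μ ∈ majorCone n},
        (((n : ℝ)⁻¹ : ℝ) : EReal) * ∑ i, φ (n * μ i)) =
      ⨆ l ∈ {l : Fin n → ℝ | Monotone l},
        ∑ i, (((ν i * l i : ℝ) : EReal) - (((n : ℝ)⁻¹ : ℝ) : EReal) * φstar (l i)) := by
  apply le_antisymm
  · obtain ⟨μ₀, hμ₀, hle⟩ := strong_core hn φ hφ_bot hφ_conv hφ_lsc hφ_one hφ_fin
      φstar hφstar ν hν
    exact le_trans (iInf₂_le μ₀ hμ₀) hle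
  · exact iSup₂_le fun l hl => le_iInf₂ fun μ hμ =>
      weak_core φ φstar hn hφ_bot hφ_one hφstar ν μ hμ l hl
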